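/- Let a > 0 and assume g(r;a) > 0 for all r ∈ (0,∞). Then w(·;a) is bounded on (0,∞) if and only if w'(r;a)/w(r;a) → 0 as r → ∞. Moreover, if w(·;a) is bounded, then w(r;a) converges to a limit l(a) ∈ (0,∞) as r → ∞ and ρ(r)^{(2-p)/(p-1)} · w'(r;a) → (p-1) · l(a)^{1/(p-1)} as r → ∞. -/

import Mathlib

open Real Set Filter MeasureTheory

open Topology

/-- `f` is a solution of the profile equation with parameter `a`:
`f` is C¹ on `[0,∞)` with derivative `f'`, the map `r ↦ |f'(r)|^{p-2} f'(r)` is C¹ on `[0,∞)`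
with derivative `F'`, the ODE
`(|f'|^{p-2}f')'(r) + ((N-1)/r)(|f'|^{p-2}f')(r) + f(r) - |f'(r)|^{p-1} = 0` holds for `r > 0`,
and `f 0 = a`, `f' 0 = 0`. -/
def IsProfileSol (N : ℕ) (p a : ℝ) (f f' F' : ℝ → ℝ) : Prop :=
  (∀ r ∈ Ici (0:ℝ), HasDerivWithinAt f (f' r) (Ici 0) r) ∧
  ContinuousOn f' (Ici 0) ∧
  (∀ r ∈ Ici (0:ℝ), HasDerivWithinAt (fun s => |f' s| ^ (p - 2) * f' s) (F' r) (Ici 0) r) ∧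
  ContinuousOn F' (Ici 0) ∧
  (∀ r, 0 < r →
    F' r + (((N : ℝ) - 1) / r) * (|f' r| ^ (p - 2) * f' r) + f r - |f' r| ^ (p - 1) = 0) ∧
  f 0 = a ∧ f' 0 = 0

/-- `g(r;a) = -|f'(r;a)|^{p-2} f'(r;a)`. -/
noncomputable def gFun (p : ℝ) (f' : ℝ → ℝ) (r : ℝ) : ℝ := -(|f' r| ^ (p - 2) * f' r)

/-- `ρ(r) = r^{N-1} e^r`. -/
noncomputable def rho (N : ℕ) (r : ℝ) : ℝ := r ^ (N - 1) * Real.exp r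

/-- the derivative of `ρ`. -/
noncomputable def rho' (N : ℕ) (r : ℝ) : ℝ :=
  (((N : ℝ) - 1) * r ^ (N - 2) + r ^ (N - 1)) * Real.exp r

/-- `w(r;a) = ρ(r) g(r;a)`. -/
noncomputable def wFun (N : ℕ) (p : ℝ) (f' : ℝ → ℝ) (r : ℝ) : ℝ := rho N r * gFun p f' r

/-- the derivative `w'(r;a) = ρ'(r) g(r;a) + ρ(r) g'(r;a)`, where `g' = -F'`. -/
noncomputable def wDeriv (N : ℕ) (p : ℝ) (f' F' : ℝ → ℝ) (r : ℝ) : ℝ :=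
  rho' N r * gFun p f' r - rho N r * F' r

section Aux

variable {N : ℕ} {p a : ℝ} {f f' F' : ℝ → ℝ}

/-- monotonicity helper -/
lemma monoOn_aux {R : ℝ} {h h' : ℝ → ℝ} (hc : ContinuousOn h (Ici R))
    (hd : ∀ r ∈ Ioi R, HasDerivAt h (h' r) r) (h0 : ∀ r ∈ Ioi R, 0 ≤ h' r) :
    MonotoneOn h (Ici R) := by
  apply monotoneOn_of_deriv_nonneg (convex_Ici R) hc
  · intro r hr
    rw [interior_Ici] at hr
    exact (hd r hr).differentiableAt.differentiableWithinAt
  · intro r hr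
    rw [interior_Ici] at hr
    rw [(hd r hr).deriv]; exact h0 r hr

/-- antitonicity helper -/
lemma antiOn_aux {R : ℝ} {h h' : ℝ → ℝ} (hc : ContinuousOn h (Ici R))
    (hd : ∀ r ∈ Ioi R, HasDerivAt h (h' r) r) (h0 : ∀ r ∈ Ioi R, h' r ≤ 0) :
    AntitoneOn h (Ici R) := by
  apply antitoneOn_of_deriv_nonpos (convex_Ici R) hc
  · intro r hr
    rw [interior_Ici] at hr
    exact (hd r hr).differentiableAt.differentiableWithinAt
  · intro r hr
    rw [interior_Ici] at hr
    rw [(hd r hr).deriv]; exact h0 r hr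

lemma hfderiv (hf : IsProfileSol N p a f f' F') {r : ℝ} (hr : 0 < r) :
    HasDerivAt f (f' r) r :=
  (hf.1 r hr.le).hasDerivAt (Ici_mem_nhds hr)

lemma hgderiv (hf : IsProfileSol N p a f f' F') {r : ℝ} (hr : 0 < r) :
    HasDerivAt (gFun p f') (-(F' r)) r := by
  have := ((hf.2.2.1 r hr.le).hasDerivAt (Ici_mem_nhds hr)).neg
  exact this

lemma f'_neg (hg : ∀ r, 0 < r → 0 < gFun p f' r) {r : ℝ} (hr : 0 < r) : f' r < 0 := by
  by_contra hcon
  push_neg at hcon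
  rcases eq_or_lt_of_le hcon with h | h
  · have := hg r hr
    rw [gFun, ← h] at this
    simp at this
  · have h1 : 0 < |f' r| ^ (p - 2) := Real.rpow_pos_of_pos (abs_pos.2 h.ne') _
    have := hg r hr
    rw [gFun] at this
    nlinarith

lemma g_eq (hg : ∀ r, 0 < r → 0 < gFun p f' r) {r : ℝ} (hr : 0 < r) :
    gFun p f' r = (-f' r) ^ (p - 1) := by
  have hneg := f'_neg hg hr
  have hpos : (0:ℝ) < -f' r := by linarith
  rw [gFun, abs_of_neg hneg, show p - 1 = (p-2) + 1 by ring, Real.rpow_add hpos,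
    Real.rpow_one]
  ring

lemma negf'_eq (hp : 1 < p) (hg : ∀ r, 0 < r → 0 < gFun p f' r) {r : ℝ} (hr : 0 < r) :
    -f' r = gFun p f' r ^ (1/(p-1)) := by
  have hneg := f'_neg hg hr
  have hpos : (0:ℝ) < -f' r := by linarith
  rw [g_eq hg hr, ← Real.rpow_mul hpos.le]
  rw [show (p-1) * (1/(p-1)) = 1 from mul_one_div_cancel (by linarith), Real.rpow_one]

lemma F'_eq (hf : IsProfileSol N p a f f' F') (hg : ∀ r, 0 < r → 0 < gFun p f' r)
    {r : ℝ} (hr : 0 < r) :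
    F' r = (1 + ((N:ℝ)-1)/r) * gFun p f' r - f r := by
  have ode := hf.2.2.2.2.1 r hr
  have hneg := f'_neg hg hr
  have h1 : |f' r| ^ (p - 2) * f' r = -gFun p f' r := by rw [gFun]; ring
  have h2 : |f' r| ^ (p - 1) = gFun p f' r := by
    rw [g_eq hg hr, abs_of_neg hneg]
  rw [h1, h2] at ode
  linear_combination ode

lemma rho_pos {r : ℝ} (hr : 0 < r) : 0 < rho N r :=
  mul_pos (pow_pos hr _) (Real.exp_pos r)

lemma rho_nonneg {r : ℝ} (hr : 0 ≤ r) : 0 ≤ rho N r :=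
  mul_nonneg (pow_nonneg hr _) (Real.exp_pos r).le

lemma hasDerivAt_rho (hN : 2 ≤ N) (r : ℝ) : HasDerivAt (rho N) (rho' N r) r := by
  have h := (hasDerivAt_pow (N-1) r).mul (Real.hasDerivAt_exp r)
  have e1 : ((N - 1 : ℕ) : ℝ) = (N : ℝ) - 1 := by
    push_cast [Nat.cast_sub (by omega : 1 ≤ N)]; ring
  have e2 : N - 1 - 1 = N - 2 := by omega
  refine h.congr_deriv ?_
  rw [rho', e1, e2]
  ring

lemma rho'_eq (hN : 2 ≤ N) {r : ℝ} (hr : 0 < r) :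
    rho' N r = rho N r * (1 + ((N:ℝ)-1)/r) := by
  have h1 : r ^ (N-1) = r ^ (N-2) * r := by
    rw [← pow_succ]; congr 1; omega
  rw [rho', rho, h1]
  field_simp
  ring

lemma rho'_pos (hN : 2 ≤ N) {r : ℝ} (hr : 0 < r) : 0 < rho' N r := by
  have hN' : (2:ℝ) ≤ (N:ℝ) := by exact_mod_cast hN
  rw [rho'_eq hN hr]
  have h0 : (0:ℝ) ≤ ((N:ℝ)-1)/r := div_nonneg (by linarith) hr.le
  have : 0 < 1 + ((N:ℝ)-1)/r := by linarith
  exact mul_pos (rho_pos hr) this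

lemma rho_mono : MonotoneOn (rho N) (Ici (0:ℝ)) := by
  intro x hx y hy hxy
  exact mul_le_mul (pow_le_pow_left₀ hx hxy _) (Real.exp_le_exp.2 hxy) (Real.exp_pos x).le
    (pow_nonneg (le_trans hx hxy) _)

lemma rho_tendsto : Tendsto (rho N) atTop atTop := by
  apply tendsto_atTop_mono' atTop (_ : ∀ᶠ r in atTop, Real.exp r ≤ rho N r)
    Real.tendsto_exp_atTop
  filter_upwards [eventually_ge_atTop (1:ℝ)] with r hr
  rw [rho]
  nlinarith [one_le_pow₀ hr (n := N - 1), Real.exp_pos r]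


lemma hasDerivAt_w (hN : 2 ≤ N) (hf : IsProfileSol N p a f f' F') {r : ℝ} (hr : 0 < r) :
    HasDerivAt (wFun N p f') (wDeriv N p f' F' r) r := by
  have h := (hasDerivAt_rho hN r).mul (hgderiv hf hr)
  have : wDeriv N p f' F' r = rho' N r * gFun p f' r + rho N r * -F' r := by
    rw [wDeriv]; ring
  rw [this]
  exact h

lemma wDeriv_eq (hN : 2 ≤ N) (hf : IsProfileSol N p a f f' F')
    (hg : ∀ r, 0 < r → 0 < gFun p f' r) {r : ℝ} (hr : 0 < r) :
    wDeriv N p f' F' r = rho N r * f r := by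
  rw [wDeriv, rho'_eq hN hr, F'_eq hf hg hr]
  ring

lemma w_pos (hg : ∀ r, 0 < r → 0 < gFun p f' r) {r : ℝ} (hr : 0 < r) :
    0 < wFun N p f' r :=
  mul_pos (rho_pos hr) (hg r hr)

lemma contOn_g (hf : IsProfileSol N p a f f' F') : ContinuousOn (gFun p f') (Ici 0) := by
  have : ContinuousOn (fun s => |f' s| ^ (p - 2) * f' s) (Ici 0) :=
    fun r hr => (hf.2.2.1 r hr).continuousWithinAt
  exact this.neg

lemma cont_rho : Continuous (rho N) := (continuous_pow _).mul Real.continuous_exp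

lemma contOn_w (hf : IsProfileSol N p a f f' F') : ContinuousOn (wFun N p f') (Ici 0) :=
  cont_rho.continuousOn.mul (contOn_g hf)

lemma contOn_f (hf : IsProfileSol N p a f f' F') : ContinuousOn f (Ici 0) :=
  fun r hr => (hf.1 r hr).continuousWithinAt

lemma f_strictAnti (hf : IsProfileSol N p a f f' F')
    (hg : ∀ r, 0 < r → 0 < gFun p f' r) : StrictAntiOn f (Ici 0) := by
  apply strictAntiOn_of_deriv_neg (convex_Ici 0) (contOn_f hf)
  intro r hr
  rw [interior_Ici] at hr
  rw [(hfderiv hf hr).deriv]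
  exact f'_neg hg hr

lemma f_pos (hN : 2 ≤ N) (hf : IsProfileSol N p a f f' F')
    (hg : ∀ r, 0 < r → 0 < gFun p f' r) (ha : 0 < a) :
    ∀ r, 0 ≤ r → 0 < f r := by
  by_contra hcon
  push_neg at hcon
  obtain ⟨r₀, hr₀, hfr₀⟩ := hcon
  set r₁ := r₀ + 1 with hr₁def
  have hr₁ : (0:ℝ) < r₁ := by linarith
  have hfr₁ : f r₁ < 0 :=
    lt_of_lt_of_le (f_strictAnti hf hg hr₀ (by simp [hr₁def]; linarith) (by linarith)) hfr₀
  set c := -f r₁ with hcdef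
  have hc : 0 < c := by linarith
  have hρ₁ : 0 < rho N r₁ := rho_pos hr₁
  -- the auxiliary decreasing function
  have hanti : AntitoneOn (fun r => wFun N p f' r + c * rho N r₁ * r) (Ici r₁) := by
    apply antiOn_aux (h' := fun r => wDeriv N p f' F' r + c * rho N r₁)
    · exact ((contOn_w hf).mono (Ici_subset_Ici.2 hr₁.le)).add
        (continuous_const.mul continuous_id).continuousOn
    · intro r hr
      have hr0 : 0 < r := lt_trans hr₁ hr
      exact (hasDerivAt_w hN hf hr0).add (((hasDerivAt_id r).const_mul (c * rho N r₁)).congr_deriv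
        (by ring))
    · intro r hr
      have hr0 : 0 < r := lt_trans hr₁ hr
      have h1 : f r ≤ -c := by
        have := f_strictAnti hf hg (by simp [hr₁def]; linarith : r₁ ∈ Ici (0:ℝ))
          (le_of_lt (lt_trans hr₁ hr) : r ∈ Ici (0:ℝ)) hr
        linarith
      have h2 : rho N r₁ ≤ rho N r := rho_mono hr₁.le (le_of_lt (lt_trans hr₁ hr))
        (le_of_lt hr)
      have h3 : rho N r * f r ≤ rho N r * (-c) :=
        mul_le_mul_of_nonneg_left h1 (rho_pos hr0).le
      have h4 : rho N r * (-c) ≤ rho N r₁ * (-c) := by nlinarith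
      rw [wDeriv_eq hN hf hg hr0]
      nlinarith
  -- evaluate at a large point
  set r₂ := r₁ + (wFun N p f' r₁)/(c * rho N r₁) + 1 with hr₂def
  have hwr₁ : 0 < wFun N p f' r₁ := w_pos hg hr₁
  have hr₂gt : r₁ ≤ r₂ := by
    have : 0 ≤ (wFun N p f' r₁)/(c * rho N r₁) := by positivity
    simp [hr₂def]; linarith
  have h5 := hanti self_mem_Ici (mem_Ici.2 hr₂gt) hr₂gt
  simp only at h5
  have hkey : wFun N p f' r₂ ≤ wFun N p f' r₁ - c * rho N r₁ * (r₂ - r₁) := by nlinarith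
  have hval : c * rho N r₁ * (r₂ - r₁) = wFun N p f' r₁ + c * rho N r₁ := by
    rw [hr₂def]
    field_simp
    ring
  have hw₂ : 0 < wFun N p f' r₂ := w_pos hg (by linarith)
  nlinarith

lemma w_mono (hN : 2 ≤ N) (hf : IsProfileSol N p a f f' F')
    (hg : ∀ r, 0 < r → 0 < gFun p f' r) (ha : 0 < a) :
    MonotoneOn (wFun N p f') (Ici (0:ℝ)) := by
  apply monoOn_aux (h' := wDeriv N p f' F') (contOn_w hf)
  · intro r hr; exact hasDerivAt_w hN hf hr
  · intro r hr
    rw [wDeriv_eq hN hf hg hr]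
    exact (mul_pos (rho_pos hr) (f_pos hN hf hg ha r hr.le)).le


lemma bounded_limits (hN : 2 ≤ N) (hp : 1 < p) (hp2 : p < 2)
    (hf : IsProfileSol N p a f f' F') (hg : ∀ r, 0 < r → 0 < gFun p f' r) (ha : 0 < a)
    {M : ℝ} (hM : ∀ r, 0 < r → |wFun N p f' r| ≤ M) :
    ∃ l : ℝ, 0 < l ∧ Tendsto (wFun N p f') atTop (𝓝 l) ∧
      Tendsto (fun r => rho N r ^ (1/(p-1)) * f r) atTop (𝓝 ((p-1) * l ^ (1/(p-1)))) := by
  have hp1' : (0:ℝ) < p - 1 := by linarith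
  set q : ℝ := 1/(p-1) with hqdef
  have hq : 0 < q := by rw [hqdef]; positivity
  have hq1 : 1 < q := by rw [hqdef, lt_div_iff₀ hp1']; linarith
  -- limit of w
  have hwmono := w_mono hN hf hg ha
  set wm : ℝ → ℝ := fun r => wFun N p f' (max r 0) with hwmdef
  have hwm_mono : Monotone wm := fun x y hxy =>
    hwmono (le_max_right x 0) (le_max_right y 0) (max_le_max hxy le_rfl)
  have hw0 : wFun N p f' 0 = 0 := by
    rw [wFun, rho, zero_pow (by omega : N - 1 ≠ 0)]; ring
  have hbdd : BddAbove (range wm) := by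
    refine ⟨max M 0, ?_⟩
    rintro x ⟨r, rfl⟩
    rcases lt_or_ge 0 (max r 0) with h | h
    · exact le_max_of_le_left ((le_abs_self _).trans (hM _ h))
    · have h2 : max r 0 = 0 := le_antisymm h (le_max_right r 0)
      simp only [hwmdef, h2, hw0]
      exact le_max_right M 0
  set l := ⨆ r, wm r with hldef
  have hlw : Tendsto (wFun N p f') atTop (𝓝 l) := by
    apply (tendsto_atTop_ciSup hwm_mono hbdd).congr'
    filter_upwards [eventually_ge_atTop (0:ℝ)] with r hr
    simp [hwmdef, max_eq_left hr]
  have hw1 : 0 < wFun N p f' 1 := w_pos hg one_pos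
  have hlpos : 0 < l := by
    refine lt_of_lt_of_le hw1 ?_
    have := le_ciSup hbdd (1:ℝ)
    simpa [hwmdef] using this
  -- limit of f
  have hfanti : AntitoneOn f (Ici 0) := (f_strictAnti hf hg).antitoneOn
  set fm : ℝ → ℝ := fun r => f (max r 0) with hfmdef
  have hfm_anti : Antitone fm := fun x y hxy =>
    hfanti (le_max_right x 0) (le_max_right y 0) (max_le_max hxy le_rfl)
  have hbdd2 : BddBelow (range fm) := by
    refine ⟨0, ?_⟩
    rintro x ⟨r, rfl⟩
    exact (f_pos hN hf hg ha _ (le_max_right r 0)).le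
  set m := ⨅ r, fm r with hmdef
  have hmf : Tendsto f atTop (𝓝 m) := by
    apply (tendsto_atTop_ciInf hfm_anti hbdd2).congr'
    filter_upwards [eventually_ge_atTop (0:ℝ)] with r hr
    simp [hfmdef, max_eq_left hr]
  have hm0 : m = 0 := by
    have hm_nonneg : 0 ≤ m :=
      le_ciInf fun r => (f_pos hN hf hg ha _ (le_max_right r 0)).le
    rcases eq_or_lt_of_le hm_nonneg with h | h
    · exact h.symm
    exfalso
    have hkey : ∀ r, 0 ≤ r → m ≤ f r := by
      intro r hr
      have := ciInf_le hbdd2 r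
      simpa [hfmdef, max_eq_left hr] using this
    have hmonoaux : MonotoneOn (fun r => wFun N p f' r - m * r) (Ici 1) := by
      apply monoOn_aux (h' := fun r => wDeriv N p f' F' r - m)
      · exact ((contOn_w hf).mono (Ici_subset_Ici.2 zero_le_one)).sub
          (continuous_const.mul continuous_id).continuousOn
      · intro r hr
        have hr0 : (0:ℝ) < r := lt_trans one_pos hr
        exact (hasDerivAt_w hN hf hr0).sub
          (((hasDerivAt_id r).const_mul m).congr_deriv (by ring))
      · intro r hr
        have hr0 : (0:ℝ) < r := lt_trans one_pos hr
        rw [wDeriv_eq hN hf hg hr0]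
        have h1 : 1 ≤ rho N r := by
          rw [rho]
          nlinarith [one_le_pow₀ (le_of_lt (show (1:ℝ) < r from hr)) (n := N-1),
            Real.one_le_exp (le_of_lt hr0)]
        have h2 : m ≤ f r := hkey r hr0.le
        nlinarith
    have hM0 : 0 ≤ M := le_trans (abs_nonneg _) (hM 1 one_pos)
    set r₂ := 1 + (M + 1)/m with hr₂def
    have hr₂ : (1:ℝ) ≤ r₂ := by
      have : 0 ≤ (M+1)/m := by positivity
      rw [hr₂def]; linarith
    have h5 := hmonoaux self_mem_Ici (mem_Ici.2 hr₂) hr₂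
    simp only at h5
    have h6 : m * r₂ = m + (M + 1) := by rw [hr₂def]; field_simp
    have h7 : wFun N p f' r₂ ≤ M := (le_abs_self _).trans (hM r₂ (by linarith))
    nlinarith
  have hftop : Tendsto f atTop (𝓝 0) := hm0 ▸ hmf
  -- L'Hopital
  have hρq0 : Tendsto (fun r => rho N r ^ (-q)) atTop (𝓝 0) :=
    (tendsto_rpow_neg_atTop hq).comp rho_tendsto
  have hE : Tendsto (fun r => ((p-1) * wFun N p f' r ^ q) * (1 + ((N:ℝ)-1)/r)⁻¹)
      atTop (𝓝 ((p-1) * l ^ q)) := by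
    have h1 : Tendsto (fun r => wFun N p f' r ^ q) atTop (𝓝 (l ^ q)) :=
      hlw.rpow_const (Or.inl hlpos.ne')
    have h2 : Tendsto (fun r:ℝ => 1 + ((N:ℝ)-1)/r) atTop (𝓝 1) := by
      have h2a := Tendsto.div_atTop (tendsto_const_nhds (x := ((N:ℝ)-1))) tendsto_id
      have h2b := (tendsto_const_nhds (x := (1:ℝ))).add h2a
      simpa using h2b
    have h3 : Tendsto (fun r:ℝ => (1 + ((N:ℝ)-1)/r)⁻¹) atTop (𝓝 1) := by
      simpa using h2.inv₀ one_ne_zero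
    simpa using (h1.const_mul (p-1)).mul h3
  have heq : (fun r => ((p-1) * wFun N p f' r ^ q) * (1 + ((N:ℝ)-1)/r)⁻¹)
      =ᶠ[atTop] (fun r => f' r / (rho' N r * (-q) * rho N r ^ (-q - 1))) := by
    filter_upwards [eventually_gt_atTop (0:ℝ)] with r hr
    have hρ := rho_pos (N := N) hr
    have hρ' := rho'_pos hN hr
    have hgr := hg r hr
    have hf'eq : f' r = -(gFun p f' r ^ q) := by
      have := negf'_eq hp hg hr
      rw [← hqdef] at this
      linarith
    have hwq : wFun N p f' r ^ q = rho N r ^ q * gFun p f' r ^ q := by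
      rw [wFun, Real.mul_rpow hρ.le hgr.le]
    have hrq : rho N r ^ (-q-1) = (rho N r ^ q * rho N r)⁻¹ := by
      rw [show -q-1 = -(q+1) by ring, Real.rpow_neg hρ.le, Real.rpow_add hρ, Real.rpow_one]
    have hc : 1 + ((N:ℝ)-1)/r = rho' N r / rho N r := by
      rw [rho'_eq hN hr]; field_simp
    have hp1q : p - 1 = q⁻¹ := by
      rw [hqdef]; field_simp
    rw [hf'eq, hwq, hrq, hc, hp1q]
    have hgq : 0 < gFun p f' r ^ q := Real.rpow_pos_of_pos hgr _
    have hρq : 0 < rho N r ^ q := Real.rpow_pos_of_pos hρ _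
    field_simp
  have hlhop : Tendsto (fun r => f r / rho N r ^ (-q)) atTop (𝓝 ((p-1) * l ^ q)) := by
    apply HasDerivAt.lhopital_zero_atTop
      (f' := f') (g' := fun r => rho' N r * (-q) * rho N r ^ (-q - 1))
    · filter_upwards [eventually_gt_atTop (0:ℝ)] with r hr
      exact hfderiv hf hr
    · filter_upwards [eventually_gt_atTop (0:ℝ)] with r hr
      exact (hasDerivAt_rho hN r).rpow_const (Or.inl (rho_pos hr).ne')
    · filter_upwards [eventually_gt_atTop (0:ℝ)] with r hr
      exact mul_ne_zero (mul_ne_zero (rho'_pos hN hr).ne' (neg_ne_zero.2 hq.ne'))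
        (Real.rpow_pos_of_pos (rho_pos hr) _).ne'
    · exact hftop
    · exact hρq0
    · exact hE.congr' heq
  refine ⟨l, hlpos, hlw, ?_⟩
  apply hlhop.congr'
  filter_upwards [eventually_gt_atTop (0:ℝ)] with r hr
  rw [Real.rpow_neg (rho_pos hr).le, div_eq_mul_inv, inv_inv, mul_comm]


set_option maxHeartbeats 1000000 in

lemma converse_bounded (hN : 2 ≤ N) (hp : 1 < p) (hp2 : p < 2)
    (hf : IsProfileSol N p a f f' F') (hg : ∀ r, 0 < r → 0 < gFun p f' r) (ha : 0 < a)
    (hu : Tendsto (fun r => wDeriv N p f' F' r / wFun N p f' r) atTop (𝓝 0)) :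
    ∃ M : ℝ, ∀ r, 0 < r → |wFun N p f' r| ≤ M := by
  have hp1' : (0:ℝ) < p - 1 := by linarith
  set q : ℝ := 1/(p-1) with hqdef
  have hq : 0 < q := by rw [hqdef]; positivity
  have hq1 : 1 < q := by rw [hqdef, lt_div_iff₀ hp1']; linarith
  set u : ℝ → ℝ := fun r => f r / gFun p f' r with hudef
  set v : ℝ → ℝ := fun r => gFun p f' r ^ (q - 1) with hvdef
  set cfn : ℝ → ℝ := fun r => 1 + ((N:ℝ)-1)/r with hcdef
  have hNr : (2:ℝ) ≤ (N:ℝ) := by exact_mod_cast hN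
  have hc1 : ∀ r : ℝ, 0 < r → 1 ≤ cfn r := by
    intro r hr
    have : 0 ≤ ((N:ℝ)-1)/r := div_nonneg (by linarith) hr.le
    simp only [hcdef]; linarith
  have hgne : ∀ r : ℝ, 0 < r → gFun p f' r ≠ 0 := fun r hr => (hg r hr).ne'
  have hueq : ∀ r : ℝ, 0 < r → wDeriv N p f' F' r / wFun N p f' r = u r := by
    intro r hr
    rw [wDeriv_eq hN hf hg hr, wFun, mul_div_mul_left _ _ (rho_pos hr).ne']
  have hu0 : Tendsto u atTop (𝓝 0) := by
    apply hu.congr'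
    filter_upwards [eventually_gt_atTop (0:ℝ)] with r hr
    exact hueq r hr
  have hupos : ∀ r : ℝ, 0 < r → 0 < u r := fun r hr =>
    div_pos (f_pos hN hf hg ha r hr.le) (hg r hr)
  have hvpos : ∀ r : ℝ, 0 < r → 0 < v r := fun r hr =>
    Real.rpow_pos_of_pos (hg r hr) _
  have hg'eq : ∀ r : ℝ, 0 < r → -(F' r) = gFun p f' r * (u r - cfn r) := by
    intro r hr
    rw [F'_eq hf hg hr]
    have hgne' : gFun p f' r ≠ 0 := (hg r hr).ne'
    have hfu : u r * gFun p f' r = f r := by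
      simp only [hudef]; field_simp
    simp only [hcdef]
    linear_combination -hfu
  have hf'eq : ∀ r : ℝ, 0 < r → f' r = -(v r * gFun p f' r) := by
    intro r hr
    have hgne' : gFun p f' r ≠ 0 := (hg r hr).ne'
    have h1 := negf'_eq hp hg hr
    rw [← hqdef] at h1
    have h2 : v r * gFun p f' r = gFun p f' r ^ q := by
      rw [hvdef]
      simp only
      rw [← Real.rpow_add_one hgne']
      congr 1
      ring
    rw [← h2] at h1
    linarith
  have hud : ∀ r : ℝ, 0 < r →
      HasDerivAt u (cfn r * u r - u r^2 - v r) r := by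
    intro r hr
    have hgne' : gFun p f' r ≠ 0 := (hg r hr).ne'
    have hrne : r ≠ 0 := hr.ne'
    have h := (hfderiv hf hr).div (hgderiv hf hr) hgne'
    refine h.congr_deriv ?_
    rw [hf'eq r hr, hg'eq r hr]
    simp only [hudef, hcdef]
    field_simp
    ring
  have hvd : ∀ r : ℝ, 0 < r →
      HasDerivAt v ((q-1) * v r * (u r - cfn r)) r := by
    intro r hr
    have hgne' : gFun p f' r ≠ 0 := (hg r hr).ne'
    have h := (hgderiv hf hr).rpow_const (p := q - 1) (Or.inl hgne')
    convert h using 1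
    rw [hg'eq r hr]
    have h2 : gFun p f' r ^ (q - 1 - 1) * gFun p f' r = v r := by
      rw [hvdef]
      simp only
      rw [← Real.rpow_add_one hgne']
      congr 1
      ring
    rw [← h2]
    ring
  have hucont : ∀ r : ℝ, 0 < r → ContinuousAt u r := fun r hr =>
    (hud r hr).continuousAt
  have hvcont : ∀ r : ℝ, 0 < r → ContinuousAt v r := fun r hr =>
    (hvd r hr).continuousAt
  clear_value q u v cfn
  -- choose R
  obtain ⟨R, hR⟩ := eventually_atTop.1
    ((hu0.eventually_lt_const (show (0:ℝ) < 1/4 by norm_num)).and (eventually_ge_atTop (1:ℝ)))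
  have hR1 : (1:ℝ) ≤ R := (hR R le_rfl).2
  have hRpos : (0:ℝ) < R := lt_of_lt_of_le one_pos hR1
  -- Claim A : u ≤ 4 v on [R, ∞)
  have claimA : ∀ r, R ≤ r → u r ≤ 4 * v r := by
    by_contra hcon
    push_neg at hcon
    obtain ⟨r₁, hr₁R, hlt⟩ := hcon
    have hr₁pos : 0 < r₁ := lt_of_lt_of_le hRpos hr₁R
    -- A1 : 4 v < u on [r₁, ∞)
    have hA1 : ∀ r, r₁ ≤ r → 4 * v r < u r := by
      by_contra hcon2
      push_neg at hcon2
      obtain ⟨r₂, hr₂, hle⟩ := hcon2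
      set φ : ℝ → ℝ := fun r => u r - 4 * v r with hφdef
      have hφcont : ContinuousOn φ (Icc r₁ r₂) := by
        intro s hs
        have hs0 : 0 < s := lt_of_lt_of_le hr₁pos hs.1
        exact ((hucont s hs0).sub ((hvcont s hs0).const_mul 4)).continuousWithinAt
      set S : Set ℝ := Icc r₁ r₂ ∩ φ ⁻¹' (Iic 0) with hSdef
      have hSne : r₂ ∈ S := by
        refine ⟨⟨hr₂, le_rfl⟩, ?_⟩
        simp only [mem_preimage, mem_Iic, hφdef]
        linarith
      have hSbdd : BddBelow S := ⟨r₁, fun x hx => hx.1.1⟩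
      have hSclosed : IsClosed S :=
        hφcont.preimage_isClosed_of_isClosed isClosed_Icc isClosed_Iic
      set r₃ := sInf S with hr₃def
      have hr₃S : r₃ ∈ S := hSclosed.csInf_mem ⟨r₂, hSne⟩ hSbdd
      have hr₃Icc : r₃ ∈ Icc r₁ r₂ := hr₃S.1
      have hφr₃ : φ r₃ ≤ 0 := hr₃S.2
      have hφr₁ : 0 < φ r₁ := by simp only [hφdef]; linarith
      have hr₁r₃ : r₁ < r₃ := by
        rcases eq_or_lt_of_le hr₃Icc.1 with h | h
        · exfalso; rw [← h] at hφr₃; linarith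
        · exact h
      have hIco : ∀ s ∈ Ico r₁ r₃, 0 < φ s := by
        intro s hs
        by_contra hφs
        push_neg at hφs
        have hsS : s ∈ S := ⟨⟨hs.1, le_trans hs.2.le hr₃Icc.2⟩, hφs⟩
        exact absurd (csInf_le hSbdd hsS) (not_le.2 hs.2)
      have hmono : MonotoneOn φ (Icc r₁ r₃) := by
        apply monotoneOn_of_deriv_nonneg (convex_Icc r₁ r₃)
          (hφcont.mono (Icc_subset_Icc le_rfl hr₃Icc.2))
        · intro s hs
          rw [interior_Icc] at hs
          have hs0 : 0 < s := lt_trans hr₁pos hs.1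
          exact (((hud s hs0).sub ((hvd s hs0).const_mul 4)).differentiableAt).differentiableWithinAt
        · intro s hs
          rw [interior_Icc] at hs
          have hs0 : 0 < s := lt_trans hr₁pos hs.1
          have hder : HasDerivAt φ ((cfn s * u s - u s^2 - v s) - 4 * ((q-1) * v s * (u s - cfn s))) s :=
            (hud s hs0).sub ((hvd s hs0).const_mul 4)
          rw [hder.deriv]
          have h1 : u s < 1/4 := (hR s (le_trans hr₁R hs.1.le)).1
          have h2 : 0 < φ s := hIco s ⟨hs.1.le, hs.2⟩
          have h3 : 4 * v s < u s := by simp only [hφdef] at h2; linarith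
          have h4 : 1 ≤ cfn s := hc1 s hs0
          have h5 : 0 < v s := hvpos s hs0
          have h6 : 0 < u s := hupos s hs0
          nlinarith [mul_nonneg (mul_nonneg (by linarith : (0:ℝ) ≤ q - 1) h5.le)
            (by linarith : (0:ℝ) ≤ cfn s - u s), mul_pos h6 (by linarith : (0:ℝ) < cfn s - u s)]
      exact absurd ((hmono ⟨le_rfl, hr₁r₃.le⟩ ⟨hr₁r₃.le, le_rfl⟩ hr₁r₃.le).trans_lt
        (lt_of_le_of_lt hφr₃ hφr₁)) (lt_irrefl _)
    -- exponential growth of u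
    have hψ : MonotoneOn (fun r => u r * Real.exp (-((r - r₁)/2))) (Ici r₁) := by
      apply monoOn_aux (h' := fun r =>
        (cfn r * u r - u r^2 - v r) * Real.exp (-((r - r₁)/2))
          + u r * (Real.exp (-((r - r₁)/2)) * -(1/2)))
      · intro s hs
        have hs0 : 0 < s := lt_of_lt_of_le hr₁pos hs
        exact ((hucont s hs0).continuousWithinAt.mul
          ((Real.continuous_exp.comp (by fun_prop)).continuousAt.continuousWithinAt))
      · intro s hs
        have hs0 : 0 < s := lt_trans hr₁pos hs
        have hlin : HasDerivAt (fun r : ℝ => -((r - r₁)/2)) (-(1/2)) s := by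
          exact (((hasDerivAt_id s).sub_const r₁).div_const 2).neg
        exact (hud s hs0).mul hlin.exp
      · intro s hs
        have hs0 : 0 < s := lt_trans hr₁pos hs
        have h1 : u s < 1/4 := (hR s (le_trans hr₁R hs.le)).1
        have h3 : 4 * v s < u s := hA1 s hs.le
        have h4 : 1 ≤ cfn s := hc1 s hs0
        have h5 : 0 < v s := hvpos s hs0
        have h6 : 0 < u s := hupos s hs0
        have hE : 0 < Real.exp (-((s - r₁)/2)) := Real.exp_pos _
        have h7 : cfn s * u s - u s^2 - v s - u s / 2 ≥ 0 := by
          nlinarith [mul_nonneg (by linarith : (0:ℝ) ≤ cfn s - 1) h6.le,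
            mul_lt_mul_of_pos_left h1 h6]
        nlinarith [mul_nonneg h7 hE.le]
    have hgrow : ∀ r, r₁ ≤ r → u r₁ * Real.exp ((r - r₁)/2) ≤ u r := by
      intro r hr
      have h : u r₁ * Real.exp (-((r₁ - r₁)/2)) ≤ u r * Real.exp (-((r - r₁)/2)) :=
        hψ self_mem_Ici (mem_Ici.2 hr) hr
      rw [show r₁ - r₁ = 0 by ring, show -((0:ℝ)/2) = 0 by norm_num,
        Real.exp_zero, mul_one] at h
      have hE : 0 < Real.exp ((r - r₁)/2) := Real.exp_pos _
      rw [Real.exp_neg] at h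
      have h2 : (Real.exp ((r - r₁)/2))⁻¹ * Real.exp ((r - r₁)/2) = 1 :=
        inv_mul_cancel₀ hE.ne'
      have h3 := mul_le_mul_of_nonneg_right h hE.le
      rw [mul_assoc, h2, mul_one] at h3
      exact h3
    set c₁ := u r₁ with hc₁def
    have hc₁pos : 0 < c₁ := hupos r₁ hr₁pos
    set Lg := Real.log (1/(4*c₁)) with hLgdef
    set r₄ := r₁ + 2*|Lg| + 2 with hr₄def
    have hr₄ : r₁ ≤ r₄ := by
      have := abs_nonneg Lg
      rw [hr₄def]; linarith
    have hur₄ : u r₄ < 1/4 := (hR r₄ (le_trans hr₁R hr₄)).1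
    have hgr₄ := hgrow r₄ hr₄
    have hexp_eq : (r₄ - r₁)/2 = |Lg| + 1 := by rw [hr₄def]; ring
    have hexp_gt : Real.exp Lg < Real.exp (|Lg| + 1) :=
      Real.exp_lt_exp.2 (by linarith [le_abs_self Lg])
    have hexp_val : Real.exp Lg = 1/(4*c₁) := Real.exp_log (by positivity)
    rw [hexp_eq] at hgr₄
    have hval2 : c₁ * Real.exp Lg = 1/4 := by
      rw [hexp_val]; field_simp
    nlinarith [mul_lt_mul_of_pos_left hexp_gt hc₁pos]
  -- Claim B : exponential decay of v
  have claimB : ∀ r, R ≤ r → v r ≤ v R * Real.exp (-((q-1)/2) * (r - R)) := by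
    have hanti : AntitoneOn (fun r => v r * Real.exp (((q-1)/2) * (r - R))) (Ici R) := by
      apply antiOn_aux (h' := fun r =>
        ((q-1) * v r * (u r - cfn r)) * Real.exp (((q-1)/2) * (r - R))
          + v r * (Real.exp (((q-1)/2) * (r - R)) * ((q-1)/2)))
      · intro s hs
        have hs0 : 0 < s := lt_of_lt_of_le hRpos hs
        exact ((hvcont s hs0).continuousWithinAt.mul
          ((Real.continuous_exp.comp (by fun_prop)).continuousAt.continuousWithinAt))
      · intro s hs
        have hs0 : 0 < s := lt_trans hRpos hs
        have hlin : HasDerivAt (fun r : ℝ => ((q-1)/2) * (r - R)) ((q-1)/2) s := by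
          simpa using (((hasDerivAt_id s).sub_const R).const_mul ((q-1)/2))
        exact (hvd s hs0).mul hlin.exp
      · intro s hs
        have hs0 : 0 < s := lt_trans hRpos hs
        have h1 : u s < 1/4 := (hR s hs.le).1
        have h4 : 1 ≤ cfn s := hc1 s hs0
        have h5 : 0 < v s := hvpos s hs0
        have hE : 0 < Real.exp (((q-1)/2) * (s - R)) := Real.exp_pos _
        have h8 : 0 ≤ (q-1) * v s := mul_nonneg (by linarith) h5.le
        have h7 : (q-1) * v s * (u s - cfn s) + v s * ((q-1)/2) ≤ 0 := by
          nlinarith [mul_le_mul_of_nonneg_left (show u s - cfn s ≤ -(3/4:ℝ) by linarith) h8]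
        nlinarith [mul_nonpos_of_nonpos_of_nonneg h7 hE.le]
    intro r hr
    have h : v r * Real.exp (((q-1)/2) * (r - R)) ≤ v R * Real.exp (((q-1)/2) * (R - R)) :=
      hanti self_mem_Ici (mem_Ici.2 hr) hr
    rw [show R - R = 0 by ring] at h
    norm_num at h
    have hE : 0 < Real.exp (((q-1)/2) * (r - R)) := Real.exp_pos _
    rw [show -((q-1)/2) * (r - R) = -(((q-1)/2) * (r - R)) by ring, Real.exp_neg]
    have h2 : (Real.exp (((q-1)/2) * (r - R)))⁻¹ * Real.exp (((q-1)/2) * (r - R)) = 1 :=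
      inv_mul_cancel₀ hE.ne'
    have hvr := hvpos R hRpos
    nlinarith
  -- Claim C: log w bounded
  set K := 8 * v R / (q-1) with hKdef
  have hvR := hvpos R hRpos
  have hq1' : q - 1 ≠ 0 := by linarith
  have hK : 0 < K := by
    rw [hKdef]; exact div_pos (by linarith) (by linarith)
  have hKval : K * ((q-1)/2) = 4 * v R := by
    rw [hKdef]; field_simp; ring
  have hL : AntitoneOn
      (fun r => Real.log (wFun N p f' r) + K * Real.exp (-((q-1)/2) * (r - R))) (Ici R) := by
    apply antiOn_aux (h' := fun r =>
      wDeriv N p f' F' r / wFun N p f' r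
        + K * (Real.exp (-((q-1)/2) * (r - R)) * (-((q-1)/2))))
    · apply ContinuousOn.add
      · apply ContinuousOn.log
        · exact (contOn_w hf).mono (Ici_subset_Ici.2 hRpos.le)
        · intro s hs
          exact (w_pos hg (lt_of_lt_of_le hRpos hs)).ne'
      · exact (continuous_const.mul (Real.continuous_exp.comp (by fun_prop))).continuousOn
    · intro s hs
      have hs0 : 0 < s := lt_trans hRpos hs
      have hlin : HasDerivAt (fun r : ℝ => -((q-1)/2) * (r - R)) (-((q-1)/2)) s := by
        simpa using (((hasDerivAt_id s).sub_const R).const_mul (-((q-1)/2)))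
      exact ((hasDerivAt_w hN hf hs0).log (w_pos hg hs0).ne').add
        ((hlin.exp).const_mul K)
    · intro s hs
      have hs0 : 0 < s := lt_trans hRpos hs
      have h1 : u s ≤ 4 * v s := claimA s hs.le
      have h2 : v s ≤ v R * Real.exp (-((q-1)/2) * (s - R)) := claimB s hs.le
      rw [hueq s hs0]
      have hE : 0 < Real.exp (-((q-1)/2) * (s - R)) := Real.exp_pos _
      nlinarith [hKval]
  refine ⟨Real.exp (Real.log (wFun N p f' R) + K), ?_⟩
  intro r hr
  rw [abs_of_pos (w_pos hg hr)]
  rcases le_or_gt R r with h | h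
  · have hLr := hL self_mem_Ici (mem_Ici.2 h) h
    simp only at hLr
    rw [show R - R = 0 by ring] at hLr
    simp only [mul_zero, neg_zero, Real.exp_zero, mul_one] at hLr
    have hE : 0 < Real.exp (-((q-1)/2) * (r - R)) := Real.exp_pos _
    have hlog : Real.log (wFun N p f' r) ≤ Real.log (wFun N p f' R) + K := by
      nlinarith [mul_pos hK hE]
    calc wFun N p f' r = Real.exp (Real.log (wFun N p f' r)) :=
          (Real.exp_log (w_pos hg hr)).symm
      _ ≤ _ := Real.exp_le_exp.2 hlog
  · have h1 : wFun N p f' r ≤ wFun N p f' R :=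
      w_mono hN hf hg ha (le_of_lt hr) hRpos.le h.le
    calc wFun N p f' r ≤ wFun N p f' R := h1
      _ = Real.exp (Real.log (wFun N p f' R)) := (Real.exp_log (w_pos hg hRpos)).symm
      _ ≤ _ := Real.exp_le_exp.2 (by linarith)

end Aux


/-- if `g(·;a) > 0` on `(0,∞)`, then `w(·;a)` is bounded on `(0,∞)` iff
`w'/w → 0` at infinity; and if bounded, `w(r;a) → l(a) ∈ (0,∞)` and
`ρ(r)^{(2-p)/(p-1)} w'(r;a) → (p-1) l(a)^{1/(p-1)}` as `r → ∞`. -/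
theorem stmt11 (N : ℕ) (hN : 2 ≤ N) (p : ℝ)
    (hp1 : 2 * (N : ℝ) / ((N : ℝ) + 1) < p) (hp2 : p < 2)
    (a : ℝ) (ha : 0 < a)
    (f f' F' : ℝ → ℝ) (hf : IsProfileSol N p a f f' F')
    (hg : ∀ r, 0 < r → 0 < gFun p f' r) :
    ((∃ M : ℝ, ∀ r, 0 < r → |wFun N p f' r| ≤ M) ↔
      Filter.Tendsto (fun r => wDeriv N p f' F' r / wFun N p f' r) Filter.atTop (nhds 0)) ∧
    ((∃ M : ℝ, ∀ r, 0 < r → |wFun N p f' r| ≤ M) →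
      ∃ l : ℝ, 0 < l ∧ Filter.Tendsto (wFun N p f') Filter.atTop (nhds l) ∧
        Filter.Tendsto (fun r => rho N r ^ ((2 - p) / (p - 1)) * wDeriv N p f' F' r)
          Filter.atTop (nhds ((p - 1) * l ^ (1 / (p - 1))))) := by
  have hNr : (2:ℝ) ≤ (N:ℝ) := by exact_mod_cast hN
  have hp : 1 < p := by
    have h1 : (1:ℝ) < 2 * (N:ℝ) / ((N:ℝ) + 1) := by
      rw [lt_div_iff₀ (by linarith)]
      linarith
    linarith
  have hpne : p - 1 ≠ 0 := by
    intro h; nlinarith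
  constructor
  · constructor
    · rintro ⟨M, hM⟩
      obtain ⟨l, hlpos, hlw, hT⟩ := bounded_limits hN hp hp2 hf hg ha hM
      have hq1 : 1 < 1/(p-1) := by rw [lt_div_iff₀ (by linarith)]; linarith
      have hρ1q : Tendsto (fun r => rho N r ^ (1 - 1/(p-1))) atTop (𝓝 0) := by
        have h2 := (tendsto_rpow_neg_atTop (show (0:ℝ) < 1/(p-1) - 1 by linarith)).comp
          (rho_tendsto (N := N))
        apply h2.congr
        intro r
        simp only [Function.comp_apply]
        congr 1
        ring
      have hcomb := (hT.mul hρ1q).mul (hlw.inv₀ hlpos.ne')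
      rw [mul_zero, zero_mul] at hcomb
      apply hcomb.congr'
      filter_upwards [eventually_gt_atTop (0:ℝ)] with r hr
      have hρ := rho_pos (N := N) hr
      have h1 : rho N r ^ ((1:ℝ)/(p-1)) * rho N r ^ (1 - 1/(p-1)) = rho N r := by
        rw [← Real.rpow_add hρ]
        norm_num
      calc rho N r ^ ((1:ℝ)/(p-1)) * f r * rho N r ^ (1 - 1/(p-1)) * (wFun N p f' r)⁻¹
          = (rho N r ^ ((1:ℝ)/(p-1)) * rho N r ^ (1 - 1/(p-1))) * f r * (wFun N p f' r)⁻¹ := by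
            ring
        _ = rho N r * f r * (wFun N p f' r)⁻¹ := by rw [h1]
        _ = wDeriv N p f' F' r * (wFun N p f' r)⁻¹ := by rw [wDeriv_eq hN hf hg hr]
        _ = wDeriv N p f' F' r / wFun N p f' r := (div_eq_mul_inv _ _).symm
    · intro htend
      exact converse_bounded hN hp hp2 hf hg ha htend
  · rintro ⟨M, hM⟩
    obtain ⟨l, hlpos, hlw, hT⟩ := bounded_limits hN hp hp2 hf hg ha hM
    refine ⟨l, hlpos, hlw, ?_⟩
    apply hT.congr'
    filter_upwards [eventually_gt_atTop (0:ℝ)] with r hr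
    have hρ := rho_pos (N := N) hr
    have hsum : (2-p)/(p-1) + 1 = 1/(p-1) := by
      field_simp
      norm_num
    rw [wDeriv_eq hN hf hg hr]
    calc rho N r ^ ((1:ℝ)/(p-1)) * f r
        = (rho N r ^ ((2-p)/(p-1)) * rho N r ^ (1:ℝ)) * f r := by
          rw [← Real.rpow_add hρ, hsum]
      _ = rho N r ^ ((2-p)/(p-1)) * (rho N r * f r) := by
          rw [Real.rpow_one]; ring
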